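/- Let v_ok̄ok = (1/2)·(e₍₀,₁₎ − e₍₀,₀₎ − e₍₁,₁₎ + e₍₁,₀₎), the tensor product of |ok̄⟩ = (1/√2)(|h̄⟩ − |t̄⟩) with |ok⟩ = (1/√2)(|z=−1/2⟩ − |z=+1/2⟩). Then the squared modulus of the inner product of v_ok̄ok with Ψ₂ equals 1/12, i.e. ‖⟪v_ok̄ok, Ψ₂⟫‖² = 1/12. -/

import Mathlib

noncomputable def Psi2 : EuclideanSpace ℂ (Fin 2 × Fin 2) :=
  ((1 / Real.sqrt 3 : ℝ) : ℂ) •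
    (EuclideanSpace.single (0, 1) 1 + EuclideanSpace.single (1, 0) 1 +
      EuclideanSpace.single (1, 1) 1)

noncomputable def vOkbarOk : EuclideanSpace ℂ (Fin 2 × Fin 2) :=
  ((1 / 2 : ℝ) : ℂ) •
    (EuclideanSpace.single (0, 1) 1 - EuclideanSpace.single (0, 0) 1 -
      EuclideanSpace.single (1, 1) 1 + EuclideanSpace.single (1, 0) 1)

theorem prob_okbar_ok : ‖(inner ℂ vOkbarOk Psi2 : ℂ)‖ ^ 2 = 1 / 12 := by
  have h : (inner ℂ vOkbarOk Psi2 : ℂ) = ((1 / (2 * Real.sqrt 3) : ℝ) : ℂ) := by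
    simp only [Psi2, vOkbarOk, inner_smul_left, inner_smul_right, inner_add_left,
      inner_add_right, inner_sub_left, inner_sub_right,
      EuclideanSpace.inner_single_left, EuclideanSpace.inner_single_right]
    norm_num [Complex.ext_iff, Prod.ext_iff]
  rw [h]
  have h3 : Real.sqrt 3 > 0 := by positivity
  rw [Complex.norm_real]
  rw [Real.norm_eq_abs, abs_of_pos (by positivity)]
  rw [div_pow, one_pow, mul_pow, Real.sq_sqrt (by norm_num : (3:ℝ) ≥ 0)]
  norm_num
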